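/- Let K be a field, σ a nontrivial automorphism of K, and V a finite-dimensional K-vector space with dim V ≥ 4. Let g be a σ-semilinear bijection of V such that g²v ∈ span{v, gv} for every v ∈ V and such that no 1-dimensional subspace of V is g-invariant. Then σ² = id, g² = c·id_V for some c ∈ K^× (so the collineation of PG(V) induced by g is a fixed-point-free involution), and dim V is even. -/
import Mathlib


/-!
STATEMENT 6: Let σ be a nontrivial automorphism of K, V a K-vector space of dimension
≥ 4, and g a σ-semilinear bijection of V with g²v ∈ span{v, gv} for all v and with no
g-invariant 1-dimensional subspace. Then σ² = id, g² = c·id for some c ∈ K^× (so the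
induced collineation of PG(V) is a fixed-point-free involution), and dim V is even.
-/

open Module Submodule

noncomputable section

private lemma aux_ind2' {K : Type*} [Field K] {V : Type*} [AddCommGroup V] [Module K V]
    (x y : V) (hx : x ≠ 0) (hy : y ∉ span K {x}) :
    ∀ a b : K, a • x + b • y = 0 → a = 0 ∧ b = 0 := by
  intro a b h
  by_cases hb : b = 0
  · subst hb
    rw [zero_smul, add_zero] at h
    exact ⟨(smul_eq_zero.mp h).resolve_right hx, rfl⟩
  · exfalso
    apply hy
    have : y = (-(b⁻¹ * a)) • x := by
      have h' : b • y = -(a • x) := by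
        rw [eq_neg_iff_add_eq_zero, add_comm]; exact h
      calc y = b⁻¹ • (b • y) := by rw [smul_smul, inv_mul_cancel₀ hb, one_smul]
        _ = b⁻¹ • (-(a • x)) := by rw [h']
        _ = (-(b⁻¹ * a)) • x := by rw [smul_neg, smul_smul, neg_smul]
    rw [this]
    exact smul_mem _ _ (mem_span_singleton_self x)

private lemma aux_rank2' {K : Type*} [Field K] {V : Type*} [AddCommGroup V] [Module K V]
    (x y : V) (h : ∀ a b : K, a • x + b • y = 0 → a = 0 ∧ b = 0) :
    Module.finrank K (span K {x, y} : Submodule K V) = 2 := by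
  have li : LinearIndependent K ![x, y] := LinearIndependent.pair_iff.mpr h
  have := finrank_span_eq_card li
  rw [show Set.range ![x, y] = {x, y} by
    ext z; simp [Matrix.range_cons, Matrix.range_empty]; tauto] at this
  simpa using this

theorem semilinear_collineation_with_fixed_joining_lines
    {K : Type*} [Field K] {V : Type*} [AddCommGroup V] [Module K V]
    [FiniteDimensional K V] (hdim : 4 ≤ Module.finrank K V)
    (σ : K ≃+* K) (hσ : σ ≠ RingEquiv.refl K)
    (g : V → V)
    (hbij : Function.Bijective g)
    (hadd : ∀ x y : V, g (x + y) = g x + g y)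
    (hsmul : ∀ (a : K) (v : V), g (a • v) = σ a • g v)
    (hline : ∀ v : V, g (g v) ∈ span K {v, g v})
    (hnofix : ∀ v : V, v ≠ 0 → g v ∉ span K {v}) :
    (∀ a : K, σ (σ a) = a) ∧
    (∃ c : K, c ≠ 0 ∧ ∀ v : V, g (g v) = c • v) ∧
    Even (Module.finrank K V) := by
  classical
  have ginj : Function.Injective g := hbij.1
  have g0 : g 0 = 0 := by
    have h := hadd 0 0
    rw [zero_add] at h
    exact (left_eq_add.mp h)
  have gne : ∀ v : V, v ≠ 0 → g v ≠ 0 := by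
    intro v hv h
    exact hv (ginj (by rw [h, g0]))
  have ind2 : ∀ v : V, v ≠ 0 → ∀ a b : K, a • v + b • g v = 0 → a = 0 ∧ b = 0 :=
    fun v hv => aux_ind2' v (g v) hv (hnofix v hv)
  have rk2 : ∀ v : V, v ≠ 0 → Module.finrank K (span K {v, g v} : Submodule K V) = 2 :=
    fun v hv => aux_rank2' v (g v) (ind2 v hv)
  have gvmem : ∀ v : V, g v ∈ span K ({v, g v} : Set V) :=
    fun v => subset_span (Set.mem_insert_of_mem _ rfl)
  have vmem : ∀ v : V, v ∈ span K ({v, g v} : Set V) :=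
    fun v => subset_span (Set.mem_insert _ _)
  have hsmem : ∀ v x : V, x ∈ span K ({v, g v} : Set V) → g x ∈ span K ({v, g v} : Set V) := by
    intro v x hx
    obtain ⟨p, q, hpq⟩ := mem_span_pair.mp hx
    rw [← hpq, hadd, hsmul, hsmul]
    exact add_mem (smul_mem _ _ (gvmem v)) (smul_mem _ _ (hline v))
  -- key intersection lemma
  have key : ∀ (U : Submodule K V), (∀ x ∈ U, g x ∈ U) → ∀ u : V, u ∉ U →
      U ⊓ span K {u, g u} = ⊥ := by
    intro U hU u hu
    have hu0 : u ≠ 0 := fun h => hu (h ▸ U.zero_mem)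
    by_contra hne
    obtain ⟨x, hxUD, hx0⟩ := (Submodule.ne_bot_iff _).mp hne
    have hgx : g x ∈ U ⊓ span K {u, g u} := ⟨hU x hxUD.1, hsmem u x hxUD.2⟩
    have hle : U ⊓ span K {u, g u} ≤ span K {u, g u} := inf_le_right
    have h2 : Module.finrank K ↥(U ⊓ span K {u, g u}) ≤ 2 := by
      rw [← rk2 u hu0]
      exact Submodule.finrank_mono hle
    have hsx : span K {x} ≤ U ⊓ span K {u, g u} := by
      exact span_le.mpr (Set.singleton_subset_iff.mpr hxUD)
    have h1 : 1 ≤ Module.finrank K ↥(U ⊓ span K {u, g u}) := by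
      have h := Submodule.finrank_mono hsx
      rwa [finrank_span_singleton hx0] at h
    by_cases h2' : Module.finrank K ↥(U ⊓ span K {u, g u}) = 2
    · have heq : U ⊓ span K {u, g u} = span K {u, g u} :=
        eq_of_le_of_finrank_le hle (by rw [h2', rk2 u hu0])
      have : span K {u, g u} ≤ U := by rw [← heq]; exact inf_le_left
      exact hu (this (vmem u))
    · have h1' : Module.finrank K ↥(U ⊓ span K {u, g u}) = 1 := by omega
      have heq : span K {x} = U ⊓ span K {u, g u} :=
        eq_of_le_of_finrank_le hsx (by rw [h1', finrank_span_singleton hx0])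
      exact hnofix x hx0 (by rw [heq]; exact hgx)
  -- four-vector independence
  have li4 : ∀ v u : V, v ≠ 0 → u ∉ span K ({v, g v} : Set V) →
      ∀ p q r s : K, p • v + q • g v + r • u + s • g u = 0 →
      p = 0 ∧ q = 0 ∧ r = 0 ∧ s = 0 := by
    intro v u hv hu p q r s heq
    have hu0 : u ≠ 0 := fun h => hu (h ▸ zero_mem _)
    have hgu : g u ∉ span K ({v, g v, u} : Set V) := by
      intro hmem
      have hkey := key (span K {v, g v}) (fun x hx => hsmem v x hx) u hu
      have hsup : span K ({v, g v} : Set V) ⊔ span K ({u, g u} : Set V) ≤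
          span K ({v, g v, u} : Set V) := by
        apply sup_le
        · exact span_mono (by intro z hz; simp only [Set.mem_insert_iff, Set.mem_singleton_iff] at hz ⊢; tauto)
        · rw [span_le]
          intro z hz
          simp only [Set.mem_insert_iff, Set.mem_singleton_iff] at hz
          rcases hz with rfl | rfl
          · exact subset_span (by simp)
          · exact hmem
      have h3 : Module.finrank K ↥(span K ({v, g v, u} : Set V)) ≤ 3 := by
        have hdecomp : span K ({v, g v, u} : Set V) =
            span K ({v, g v} : Set V) ⊔ span K ({u} : Set V) := by
          rw [← Submodule.span_union]
          congr 1
          ext z; simp only [Set.mem_insert_iff, Set.mem_union, Set.mem_singleton_iff]; tauto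
        rw [hdecomp]
        have hform := Submodule.finrank_sup_add_finrank_inf_eq
          (span K ({v, g v} : Set V)) (span K ({u} : Set V))
        have e1 := rk2 v hv
        have e2 := finrank_span_singleton (K := K) hu0
        omega
      have hform := Submodule.finrank_sup_add_finrank_inf_eq
        (span K ({v, g v} : Set V)) (span K ({u, g u} : Set V))
      rw [hkey, finrank_bot K V] at hform
      have e1 := rk2 v hv
      have e2 := rk2 u hu0
      have e3 : Module.finrank K ↥(span K ({v, g v} : Set V) ⊔ span K ({u, g u} : Set V)) ≤ 3 :=
        le_trans (Submodule.finrank_mono hsup) h3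
      omega
    have hs : s = 0 := by
      by_contra hs
      apply hgu
      have hlin : g u = (-(s⁻¹*p)) • v + (-(s⁻¹*q)) • g v + (-(s⁻¹*r)) • u := by
        have h' : s • g u = -(p • v + q • g v + r • u) := by
          rw [eq_neg_iff_add_eq_zero]
          calc s • g u + (p • v + q • g v + r • u)
              = p • v + q • g v + r • u + s • g u := by abel
            _ = 0 := heq
        calc g u = s⁻¹ • (s • g u) := by rw [smul_smul, inv_mul_cancel₀ hs, one_smul]
          _ = s⁻¹ • (-(p • v + q • g v + r • u)) := by rw [h']
          _ = (-(s⁻¹*p)) • v + (-(s⁻¹*q)) • g v + (-(s⁻¹*r)) • u := by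
              rw [smul_neg, smul_add, smul_add, smul_smul, smul_smul, smul_smul]
              rw [neg_add, neg_add, neg_smul, neg_smul, neg_smul]
      rw [hlin]
      refine add_mem (add_mem ?_ ?_) ?_
      · exact smul_mem _ _ (subset_span (by simp))
      · exact smul_mem _ _ (subset_span (by simp))
      · exact smul_mem _ _ (subset_span (by simp))
    subst hs
    rw [zero_smul, add_zero] at heq
    have hr : r = 0 := by
      by_contra hr
      apply hu
      have hlin : u = (-(r⁻¹*p)) • v + (-(r⁻¹*q)) • g v := by
        have h' : r • u = -(p • v + q • g v) := by
          rw [eq_neg_iff_add_eq_zero]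
          calc r • u + (p • v + q • g v) = p • v + q • g v + r • u := by abel
            _ = 0 := heq
        calc u = r⁻¹ • (r • u) := by rw [smul_smul, inv_mul_cancel₀ hr, one_smul]
          _ = r⁻¹ • (-(p • v + q • g v)) := by rw [h']
          _ = (-(r⁻¹*p)) • v + (-(r⁻¹*q)) • g v := by
              rw [smul_neg, smul_add, smul_smul, smul_smul, neg_add, neg_smul, neg_smul]
      rw [hlin]
      exact add_mem (smul_mem _ _ (vmem v)) (smul_mem _ _ (gvmem v))
    subst hr
    rw [zero_smul, add_zero] at heq
    obtain ⟨hp, hq⟩ := ind2 v hv p q heq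
    exact ⟨hp, hq, rfl, rfl⟩
  -- coefficient functions
  have habex : ∀ v : V, ∃ p q : K, g (g v) = p • v + q • g v := by
    intro v
    obtain ⟨p, q, h⟩ := mem_span_pair.mp (hline v)
    exact ⟨p, q, h.symm⟩
  choose a b hab using habex
  -- step: for independent configurations coefficients agree
  have step : ∀ v u : V, v ≠ 0 → u ∉ span K ({v, g v} : Set V) →
      a v = a u ∧ b v = b u := by
    intro v u hv hu
    have hu0 : u ≠ 0 := fun h => hu (h ▸ zero_mem _)
    have hvu : v + u ≠ 0 := by
      intro h
      apply hu
      rw [eq_neg_of_add_eq_zero_right h]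
      exact neg_mem (vmem v)
    have e1 : g (g (v + u)) = a (v+u) • (v+u) + b (v+u) • (g v + g u) := by
      rw [hab (v+u), hadd v u]
    have e2 : g (g (v + u)) = a v • v + b v • g v + (a u • u + b u • g u) := by
      rw [hadd v u, hadd (g v) (g u), hab v, hab u]
    have e3 : (a (v+u) - a v) • v + (b (v+u) - b v) • g v + (a (v+u) - a u) • u
        + (b (v+u) - b u) • g u = 0 := by
      have h := sub_eq_zero.mpr (e1.symm.trans e2)
      linear_combination (norm := module) h
    obtain ⟨h1, h2, h3, h4⟩ := li4 v u hv hu _ _ _ _ e3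
    exact ⟨(sub_eq_zero.mp h1).symm.trans (sub_eq_zero.mp h3),
      (sub_eq_zero.mp h2).symm.trans (sub_eq_zero.mp h4)⟩
  -- constancy
  have const : ∀ v w : V, v ≠ 0 → w ≠ 0 → a v = a w ∧ b v = b w := by
    intro v w hv hw
    by_cases hmem : w ∈ span K ({v, g v} : Set V)
    · obtain ⟨u, hu⟩ : ∃ u : V, u ∉ span K ({v, g v} : Set V) := by
        by_contra h
        push_neg at h
        have htop : span K ({v, g v} : Set V) = ⊤ := eq_top_iff'.mpr h
        have := rk2 v hv
        rw [htop, finrank_top] at this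
        omega
      have huw : u ∉ span K ({w, g w} : Set V) := by
        intro hmem2
        apply hu
        have hsub : span K ({w, g w} : Set V) ≤ span K ({v, g v} : Set V) := by
          rw [span_le]
          intro z hz
          simp only [Set.mem_insert_iff, Set.mem_singleton_iff] at hz
          rcases hz with rfl | rfl
          · exact hmem
          · exact hsmem v w hmem
        exact hsub hmem2
      obtain ⟨h1, h2⟩ := step v u hv hu
      obtain ⟨h3, h4⟩ := step w u hw huw
      exact ⟨h1.trans h3.symm, h2.trans h4.symm⟩
    · exact step v w hv hmem
  -- base point
  obtain ⟨v₀, hv₀⟩ : ∃ v : V, v ≠ 0 := by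
    have hpos : 0 < Module.finrank K V := by omega
    have := Module.nontrivial_of_finrank_pos hpos
    exact exists_ne 0
  -- scaling relations
  have scaling : ∀ l : K, l ≠ 0 →
      a v₀ * l = σ (σ l) * a v₀ ∧ b v₀ * σ l = σ (σ l) * b v₀ := by
    intro l hl
    have hlv : l • v₀ ≠ 0 := smul_ne_zero hl hv₀
    have e1 : g (g (l • v₀)) = (σ (σ l) * a v₀) • v₀ + (σ (σ l) * b v₀) • g v₀ := by
      rw [hsmul l v₀, hsmul (σ l) (g v₀), hab v₀, smul_add, smul_smul, smul_smul]
    have e2 : g (g (l • v₀)) = (a v₀ * l) • v₀ + (b v₀ * σ l) • g v₀ := by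
      rw [hab (l • v₀), hsmul l v₀, smul_smul, smul_smul,
        (const (l • v₀) v₀ hlv hv₀).1, (const (l • v₀) v₀ hlv hv₀).2]
    have e3 := sub_eq_zero.mpr (e1.symm.trans e2)
    have e4 : (σ (σ l) * a v₀ - a v₀ * l) • v₀ + (σ (σ l) * b v₀ - b v₀ * σ l) • g v₀ = 0 := by
      linear_combination (norm := module) e3
    obtain ⟨h1, h2⟩ := ind2 v₀ hv₀ _ _ e4
    exact ⟨(sub_eq_zero.mp h1).symm, (sub_eq_zero.mp h2).symm⟩
  -- σ moves some element
  obtain ⟨l₀, hl₀⟩ : ∃ l : K, σ l ≠ l := by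
    by_contra h
    push_neg at h
    exact hσ (RingEquiv.ext h)
  have hl₀0 : l₀ ≠ 0 := by
    intro h
    apply hl₀
    rw [h, map_zero]
  have hσl : σ (σ l₀) ≠ σ l₀ := fun h => hl₀ (σ.injective h)
  have hB0 : b v₀ = 0 := by
    by_contra hB0
    apply hσl
    have h := (scaling l₀ hl₀0).2
    rw [mul_comm (b v₀) (σ l₀)] at h
    exact (mul_right_cancel₀ hB0 h).symm
  have hgg : ∀ v : V, g (g v) = a v₀ • v := by
    intro v
    by_cases hv : v = 0
    · rw [hv, g0, g0, smul_zero]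
    · rw [hab v, (const v v₀ hv hv₀).1, (const v v₀ hv hv₀).2, hB0,
        zero_smul, add_zero]
  have hA0 : a v₀ ≠ 0 := by
    intro h
    have h2 := hgg v₀
    rw [h, zero_smul] at h2
    exact gne (g v₀) (gne v₀ hv₀) h2
  have hσ2 : ∀ l : K, σ (σ l) = l := by
    intro l
    by_cases hl : l = 0
    · rw [hl, map_zero, map_zero]
    · have h := (scaling l hl).1
      rw [mul_comm (a v₀) l] at h
      exact (mul_right_cancel₀ hA0 h).symm
  refine ⟨hσ2, ⟨a v₀, hA0, hgg⟩, ?_⟩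
  -- evenness via maximal even-dimensional invariant subspace
  set P : ℕ → Prop := fun m => Even m ∧
    ∃ U : Submodule K V, (∀ x ∈ U, g x ∈ U) ∧ Module.finrank K U = m with hP
  have hP0 : P 0 := by
    refine ⟨Even.zero, ⊥, ?_, finrank_bot K V⟩
    intro x hx
    rw [Submodule.mem_bot] at hx ⊢
    rw [hx, g0]
  set m₀ := Nat.findGreatest P (Module.finrank K V) with hm₀
  have hPm₀ : P m₀ := Nat.findGreatest_spec (Nat.zero_le _) hP0
  obtain ⟨hmeven, U, hUinv, hUrk⟩ := hPm₀
  have hUtop : U = ⊤ := by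
    by_contra hne
    obtain ⟨u, hu⟩ : ∃ u : V, u ∉ U := by
      by_contra h
      push_neg at h
      exact hne (eq_top_iff'.mpr h)
    have hu0 : u ≠ 0 := fun h => hu (h ▸ U.zero_mem)
    have hbot := key U hUinv u hu
    have hinv' : ∀ x ∈ U ⊔ span K ({u, g u} : Set V), g x ∈ U ⊔ span K ({u, g u} : Set V) := by
      intro x hx
      obtain ⟨y, hy, z, hz, rfl⟩ := Submodule.mem_sup.mp hx
      rw [hadd]
      exact add_mem (Submodule.mem_sup_left (hUinv y hy))
        (Submodule.mem_sup_right (hsmem u z hz))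
    have hform := Submodule.finrank_sup_add_finrank_inf_eq U (span K ({u, g u} : Set V))
    rw [hbot, finrank_bot K V] at hform
    have e2 := rk2 u hu0
    have hrk2 : Module.finrank K ↥(U ⊔ span K ({u, g u} : Set V)) = m₀ + 2 := by omega
    have hPnew : P (m₀ + 2) := by
      refine ⟨?_, _, hinv', hrk2⟩
      rcases hmeven with ⟨k, hk⟩
      exact ⟨k + 1, by omega⟩
    have hle2 : m₀ + 2 ≤ Module.finrank K V := by
      rw [← hrk2]
      exact Submodule.finrank_le _
    have := Nat.le_findGreatest hle2 hPnew
    omega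
  rw [← finrank_top K V, ← hUtop, hUrk]
  exact hmeven
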